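/- arXiv:2409.15580 — 2 statements merged into one kernel-verified Lean document; each statement's English description precedes it below -/
import Mathlib

section
/- Let π : C̃ → C be a finite étale cover of degree 2 of smooth projective curves over a field k of characteristic 2. Then there is a short exact sequence of O_C-modules 0 → O_C → π_* O_{C̃} → O_C → 0, where the first map is the structure morphism π^#. -/
set_option linter.unusedSectionVars false


open TensorProduct

variable {A B : Type*} [CommRing A] [CommRing B] [Algebra A B]

/-- `x ⊗ y ↦ f x • y`. -/
noncomputable def Hmap (f : B →ₗ[A] A) : B ⊗[A] B →ₗ[A] B :=
  TensorProduct.lift (LinearMap.mk₂ A (fun x y => f x • y)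
    (fun x₁ x₂ y => by simp [add_smul])
    (fun a x y => by simp [mul_smul])
    (fun x y₁ y₂ => by simp [smul_add])
    (fun a x y => by simp [smul_comm a]))

@[simp] lemma Hmap_tmul (f : B →ₗ[A] A) (x y : B) : Hmap f (x ⊗ₜ[A] y) = f x • y := rfl

lemma Hmap_left_mul (f : B →ₗ[A] A) (s : B) (u : B ⊗[A] B) :
    Hmap f ((s ⊗ₜ[A] (1:B)) * u) = Hmap (f ∘ₗ LinearMap.mulLeft A s) u := by
  induction u using TensorProduct.induction_on with
  | zero => simp
  | tmul x y => simp [Algebra.TensorProduct.tmul_mul_tmul]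
  | add u v hu hv => simp [mul_add, hu, hv]

lemma Hmap_right_mul (f : B →ₗ[A] A) (s : B) (u : B ⊗[A] B) :
    Hmap f (((1:B) ⊗ₜ[A] s) * u) = s * Hmap f u := by
  induction u using TensorProduct.induction_on with
  | zero => simp
  | tmul x y => simp [Algebra.TensorProduct.tmul_mul_tmul, mul_smul_comm, mul_comm s y]
  | add u v hu hv => simp [mul_add, hu, hv, hv]

section
variable {ι : Type*} [Fintype ι] [DecidableEq ι] (e : Module.Basis ι A B)

lemma trace_eq_sum_coord (x : B) :
    Algebra.trace A B x = ∑ j, e.repr (x * e j) j := by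
  rw [Algebra.trace_eq_matrix_trace e x, Matrix.trace]
  simp [Matrix.diag, Algebra.leftMulMatrix_eq_repr_mul]

lemma sum_Hmap_right (u : B ⊗[A] B) :
    ∑ j, Hmap (e.coord j) (((1:B) ⊗ₜ[A] e j) * u) = Algebra.TensorProduct.lmul' A u := by
  induction u using TensorProduct.induction_on with
  | zero => simp
  | tmul x y =>
    simp only [Algebra.TensorProduct.tmul_mul_tmul, one_mul, Hmap_tmul,
      Algebra.TensorProduct.lmul'_apply_tmul, Module.Basis.coord_apply]
    rw [mul_comm x y]
    simp only [mul_comm (e _) y]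
    calc ∑ j, e.repr x j • (y * e j) = y * ∑ j, e.repr x j • e j := by
          rw [Finset.mul_sum]; simp [mul_smul_comm]
      _ = y * x := by rw [Module.Basis.sum_repr]
  | add u v hu hv => simp only [mul_add, map_add, Finset.sum_add_distrib, hu, hv]

lemma sum_Hmap_left (u : B ⊗[A] B) :
    ∑ j, Hmap (e.coord j) ((e j ⊗ₜ[A] (1:B)) * u) = Hmap (Algebra.trace A B) u := by
  induction u using TensorProduct.induction_on with
  | zero => simp
  | tmul x y =>
    simp only [Algebra.TensorProduct.tmul_mul_tmul, mul_one, Hmap_tmul, Module.Basis.coord_apply]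
    simp only [one_mul]
    rw [← Finset.sum_smul, trace_eq_sum_coord e x]
    congr 1
    exact Finset.sum_congr rfl fun j _ => by rw [mul_comm (e j) x]
  | add u v hu hv => simp only [mul_add, map_add, Finset.sum_add_distrib, hu, hv]

end

/-- `x ⊗ y ↦ f y • x`. -/
noncomputable def Kmap (f : B →ₗ[A] A) : B ⊗[A] B →ₗ[A] B :=
  (Hmap f) ∘ₗ (TensorProduct.comm A B B).toLinearMap

@[simp] lemma Kmap_tmul (f : B →ₗ[A] A) (x y : B) : Kmap f (x ⊗ₜ[A] y) = f y • x := rfl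

lemma trace_Kmap_mul (f : B →ₗ[A] A) (b : B) (u : B ⊗[A] B) :
    Algebra.trace A B (Kmap f u * b)
      = f (Hmap ((Algebra.trace A B) ∘ₗ LinearMap.mulLeft A b) u) := by
  induction u using TensorProduct.induction_on with
  | zero => simp
  | tmul x y => simp [smul_mul_assoc, mul_comm b x, mul_comm (f y)]
  | add u v hu hv => simp [add_mul, hu, hv]

set_option maxHeartbeats 1000000 in
universe u

/-- Let `π : C̃ → C` be a finite étale cover of degree `2` of smooth
projective curves over a field of characteristic `2`.  Then there is a short exact
sequence of `O_C`-modules `0 → O_C → π_* O_{C̃} → O_C → 0`, where the first map is the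
structure morphism `π^#`.

Exactness of a sequence of sheaves is a local statement, so we formalize the
affine-local (equivalently, ring-theoretic) version, which is valid over an arbitrary
base ring of characteristic `2`: if `B` is a finite étale `A`-algebra which is locally
free of rank `2` (in char `2`), then `0 → A → B → A → 0` is exact, where the first map
is the structure map `algebraMap A B` and the second map realizing the quotient
`B/A ≅ A` is the trace `Tr_{B/A}` (this is precisely the Artin–Schreier trivialization
of the quotient line bundle used in the paper). -/
theorem artinSchreier_ses_of_etale_double_cover
    (A B : Type u) [CommRing A] [CommRing B] [Algebra A B] [CharP A 2]
    [Algebra.Etale A B] [Module.Free A B] (hrank : Module.finrank A B = 2) :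
    Function.Injective (algebraMap A B) ∧
    Function.Surjective (Algebra.trace A B) ∧
    (∀ b : B, Algebra.trace A B b = 0 ↔ b ∈ (algebraMap A B).range) := by
  classical
  have h2 : (2 : A) = 0 := by
    have := CharP.cast_eq_zero A 2; exact_mod_cast this
  haveI : Nontrivial A := CharP.nontrivial_of_char_ne_one (R := A) (v := 2) (by norm_num)
  haveI : Algebra.EssFiniteType A B := inferInstance
  haveI : Module.Finite A B := Algebra.FormallyUnramified.finite_of_free (R := A) (S := B)
  -- the separability idempotent
  obtain ⟨t, ht1, ht2⟩ :=
    (Algebra.FormallyUnramified.iff_exists_tensorProduct (R := A) (S := B)).mp inferInstance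
  have ht1' : ∀ s : B, ((1:B) ⊗ₜ[A] s) * t = (s ⊗ₜ[A] (1:B)) * t := by
    intro s
    have := ht1 s
    rwa [sub_mul, sub_eq_zero] at this
  -- a basis
  let e : Module.Basis (Fin 2) A B := Module.finBasisOfFinrankEq A B hrank
  -- `Hmap Tr t = 1`
  have hTr1 : Hmap (Algebra.trace A B) t = 1 := by
    rw [← sum_Hmap_left e t]
    calc ∑ j, Hmap (e.coord j) ((e j ⊗ₜ[A] (1:B)) * t)
        = ∑ j, Hmap (e.coord j) (((1:B) ⊗ₜ[A] e j) * t) := by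
          exact Finset.sum_congr rfl fun j _ => by rw [ht1']
      _ = Algebra.TensorProduct.lmul' A t := sum_Hmap_right e t
      _ = 1 := ht2
  -- reproducing identity
  have hrepr : ∀ b : B, Hmap ((Algebra.trace A B) ∘ₗ LinearMap.mulLeft A b) t = b := by
    intro b
    rw [← Hmap_left_mul, ← ht1', Hmap_right_mul, hTr1, mul_one]
  -- dual identity : `Tr (Kmap f t * b) = f b`
  have hdual : ∀ (f : B →ₗ[A] A) (b : B), Algebra.trace A B (Kmap f t * b) = f b := by
    intro f b
    rw [trace_Kmap_mul, hrepr]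
  -- an element of trace one
  set y : B := Kmap (e.coord 0) t * e 0 with hy
  have hTry : Algebra.trace A B y = 1 := by
    rw [hy, hdual]; simp
  have htraceSurj : Function.Surjective (Algebra.trace A B) := by
    intro a
    exact ⟨a • y, by rw [map_smul, hTry, smul_eq_mul, mul_one]⟩
  have hinj : Function.Injective (algebraMap A B) := by
    rw [injective_iff_map_eq_zero]
    intro a ha
    have : a • y = 0 := by rw [Algebra.smul_def, ha, zero_mul]
    have := congrArg (Algebra.trace A B) this
    rwa [map_smul, hTry, smul_eq_mul, mul_one, map_zero] at this
  refine ⟨hinj, htraceSurj, ?_⟩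
  -- trace of 1 is 0
  have hTr1' : Algebra.trace A B (1 : B) = 0 := by
    rw [show (1:B) = algebraMap A B 1 from (map_one _).symm, Algebra.trace_algebraMap,
      hrank]
    simp [h2, two_smul, ← two_mul]
  -- the family (1, y) is a basis
  set v : Fin 2 → B := ![1, y] with hv
  have hgram : Algebra.traceMatrix A v = !![0, 1; 1, Algebra.trace A B (y*y)] := by
    ext i j
    fin_cases i <;> fin_cases j <;>
      simp [Algebra.traceMatrix_apply, Algebra.traceForm_apply, v, hTr1', hTry]
  have hdet : IsUnit (Matrix.det (Algebra.traceMatrix A v)) := by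
    rw [hgram]
    simp [Matrix.det_fin_two]
  have hvP : v = Matrix.vecMul (⇑e) ((e.toMatrix v).map (algebraMap A B)) := by
    funext j
    simp only [Matrix.vecMul, dotProduct, Matrix.map_apply, Module.Basis.toMatrix_apply]
    conv_lhs => rw [← Module.Basis.sum_repr e (v j)]
    exact Finset.sum_congr rfl fun i _ => by rw [Algebra.smul_def, mul_comm]
  have hfac : Matrix.det (Algebra.traceMatrix A v) =
      (e.toMatrix v).det * ((Algebra.traceMatrix A (⇑e)).det * (e.toMatrix v).det) := by
    conv_lhs => rw [hvP]
    rw [Algebra.traceMatrix_of_matrix_vecMul, Matrix.det_mul, Matrix.det_mul,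
      Matrix.det_transpose, mul_assoc]
  have hdetP : IsUnit (e.toMatrix v).det :=
    isUnit_of_dvd_unit ⟨_, hfac⟩ hdet
  have hbasis := (Module.Basis.is_basis_iff_det e (v := v)).mpr (by rwa [Module.Basis.det_apply])
  let v' : Module.Basis (Fin 2) A B := Module.Basis.mk hbasis.1 hbasis.2.ge
  have hv' : ∀ j, v' j = v j := fun j => Module.Basis.mk_apply _ _ j
  intro b
  constructor
  · intro hb
    have hb' : b = v'.repr b 0 • (1:B) + v'.repr b 1 • y := by
      conv_lhs => rw [← Module.Basis.sum_repr v' b]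
      rw [Fin.sum_univ_two, hv' 0, hv' 1]
      simp [v]
    have htr : Algebra.trace A B (v'.repr b 0 • (1:B) + v'.repr b 1 • y) = v'.repr b 1 := by
      simp [hTr1', hTry]
    have h1 : v'.repr b 1 = 0 := by rw [← htr, ← hb', hb]
    exact ⟨v'.repr b 0, by
      rw [Algebra.algebraMap_eq_smul_one]
      conv_rhs => rw [hb', h1, zero_smul, add_zero]⟩
  · rintro ⟨a, rfl⟩
    rw [Algebra.trace_algebraMap, hrank, two_smul, ← two_mul, h2, zero_mul]
end

section
/- Let k be a field of characteristic 2 and let X = V₊(f) ⊂ ℙ⁴_k be a smooth cubic threefold containing the line l = V₊(x₀, x₁, x₂), with f = u²x₀ + uv x₁ + v²x₂ + u Q₀ + v Q₁ + R where Q₀, Q₁ are quadratic and R is cubic in x₀, x₁, x₂ (writing u = x₃, v = x₄). Then the discriminant curve of the conic bundle obtained by projecting away from l is the plane quintic C = V₊(H) where H(y₀,y₁,y₂) = y₀ Q₁² + y₁² R + y₁ Q₀ Q₁ + y₂ Q₀², and if l is a good line then C is smooth. -/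
open MvPolynomial

noncomputable section

namespace Stmt17

variable {k : Type} [Field k]

/-- The inclusion of the variables `x₀, x₁, x₂` into the variables `x₀, …, x₄`. -/
def incl : Fin 3 → Fin 5 := Fin.castLE (by omega)

/-- The cubic form `f = u²x₀ + uv x₁ + v²x₂ + u Q₀ + v Q₁ + R` (with `u = x₃`,
`v = x₄`), whose vanishing defines a cubic threefold `X ⊂ ℙ⁴` containing the line
`l = V₊(x₀,x₁,x₂)`, in the normal form for a line not in `F₀(X)`. -/
def cubicForm (Q₀ Q₁ R : MvPolynomial (Fin 3) k) : MvPolynomial (Fin 5) k :=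
  X 3 ^ 2 * X 0 + X 3 * X 4 * X 1 + X 4 ^ 2 * X 2 +
    X 3 * rename incl Q₀ + X 4 * rename incl Q₁ + rename incl R

/-- For a point `T = [y₀:y₁:y₂]` of `ℙ²` (with coordinates in a field `K`), the conic
`K_T` residual to `l` in the 2-plane `P_T ∩ X` is defined by
`G_T(u,v,t) = u²y₀ + uv y₁ + v²y₂ + ut Q₀(y) + vt Q₁(y) + t² R(y)`,
in variables `u = X 0`, `v = X 1`, `t = X 2`. -/
def fiberConic (Q₀ Q₁ R : MvPolynomial (Fin 3) k) {K : Type} [Field K] [Algebra k K]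
    (y : Fin 3 → K) : MvPolynomial (Fin 3) K :=
  C (y 0) * X 0 ^ 2 + C (y 1) * X 0 * X 1 + C (y 2) * X 1 ^ 2 +
    C (aeval y Q₀) * X 0 * X 2 + C (aeval y Q₁) * X 1 * X 2 + C (aeval y R) * X 2 ^ 2

/-- The discriminant `H = y₀Q₁² + y₁²R + y₁Q₀Q₁ + y₂Q₀²` of the conic bundle. -/
def discriminant (Q₀ Q₁ R : MvPolynomial (Fin 3) k) : MvPolynomial (Fin 3) k :=
  X 0 * Q₁ ^ 2 + X 1 ^ 2 * R + X 1 * Q₀ * Q₁ + X 2 * Q₀ ^ 2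

lemma incl_injective : Function.Injective (incl : Fin 3 → Fin 5) := Fin.castLE_injective _

lemma pderiv_rename_out (q : MvPolynomial (Fin 3) k) (i : Fin 5) (h : ∀ j : Fin 3, incl j ≠ i) :
    pderiv i (rename incl q) = 0 := by
  classical
  apply pderiv_eq_zero_of_notMem_vars
  intro hv
  obtain ⟨j, -, hj⟩ := mem_vars_rename _ _ hv
  exact h j hj


variable (Q₀ Q₁ R : MvPolynomial (Fin 3) k) {K : Type} [Field K] [Algebra k K]

lemma aeval_fiberConic (y p : Fin 3 → K) :
    aeval p (fiberConic Q₀ Q₁ R y) =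
      y 0 * p 0 ^ 2 + y 1 * (p 0 * p 1) + y 2 * p 1 ^ 2 +
      aeval y Q₀ * (p 0 * p 2) + aeval y Q₁ * (p 1 * p 2) + aeval y R * p 2 ^ 2 := by
  simp only [fiberConic, map_add, map_mul, map_pow, aeval_X, aeval_C,
    Algebra.algebraMap_self_apply]
  ring

lemma aeval_pderiv_fiberConic₀ [CharP K 2] (y p : Fin 3 → K) :
    aeval p (pderiv 0 (fiberConic Q₀ Q₁ R y)) = y 1 * p 1 + aeval y Q₀ * p 2 := by
  have h2 : (2 : K) = 0 := by exact_mod_cast CharP.cast_eq_zero K 2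
  simp only [fiberConic, map_add, map_mul, map_pow, pderiv_mul, pderiv_pow, pderiv_X, pderiv_C,
    Pi.single_apply, Fin.reduceEq, reduceIte, Algebra.algebraMap_self_apply, map_natCast,
    map_zero, map_one, zero_mul, mul_zero, add_zero, zero_add, mul_one, one_mul, aeval_X, aeval_C]
  linear_combination (y 0 * p 0) * h2

lemma aeval_pderiv_fiberConic₁ [CharP K 2] (y p : Fin 3 → K) :
    aeval p (pderiv 1 (fiberConic Q₀ Q₁ R y)) = y 1 * p 0 + aeval y Q₁ * p 2 := by
  have h2 : (2 : K) = 0 := by exact_mod_cast CharP.cast_eq_zero K 2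
  simp only [fiberConic, map_add, map_mul, map_pow, pderiv_mul, pderiv_pow, pderiv_X, pderiv_C,
    Pi.single_apply, Fin.reduceEq, reduceIte, Algebra.algebraMap_self_apply, map_natCast,
    map_zero, map_one, zero_mul, mul_zero, add_zero, zero_add, mul_one, one_mul, aeval_X, aeval_C]
  linear_combination (y 2 * p 1) * h2

lemma aeval_pderiv_fiberConic₂ [CharP K 2] (y p : Fin 3 → K) :
    aeval p (pderiv 2 (fiberConic Q₀ Q₁ R y)) = aeval y Q₀ * p 0 + aeval y Q₁ * p 1 := by
  have h2 : (2 : K) = 0 := by exact_mod_cast CharP.cast_eq_zero K 2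
  simp only [fiberConic, map_add, map_mul, map_pow, pderiv_mul, pderiv_pow, pderiv_X, pderiv_C,
    Pi.single_apply, Fin.reduceEq, reduceIte, Algebra.algebraMap_self_apply, map_natCast,
    map_zero, map_one, zero_mul, mul_zero, add_zero, zero_add, mul_one, one_mul, aeval_X, aeval_C]
  linear_combination (aeval y R * p 2) * h2

lemma aeval_discriminant (y : Fin 3 → K) :
    aeval y (discriminant Q₀ Q₁ R) =
      y 0 * aeval y Q₁ ^ 2 + y 1 ^ 2 * aeval y R + y 1 * (aeval y Q₀ * aeval y Q₁) +
        y 2 * aeval y Q₀ ^ 2 := by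
  simp only [discriminant, map_add, map_mul, map_pow, aeval_X]
  ring

lemma aeval_pderiv_discriminant₀ [CharP K 2] (y : Fin 3 → K) :
    aeval y (pderiv 0 (discriminant Q₀ Q₁ R)) =
      aeval y Q₁ ^ 2 + y 1 ^ 2 * aeval y (pderiv 0 R) +
        y 1 * (aeval y (pderiv 0 Q₀) * aeval y Q₁ + aeval y Q₀ * aeval y (pderiv 0 Q₁)) := by
  have h2 : (2 : K) = 0 := by exact_mod_cast CharP.cast_eq_zero K 2
  simp only [discriminant, map_add, map_mul, map_pow, pderiv_mul, pderiv_pow, pderiv_X,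
    Pi.single_apply, Fin.reduceEq, reduceIte, map_natCast, map_zero, map_one,
    zero_mul, mul_zero, add_zero, zero_add, mul_one, one_mul, aeval_X]
  linear_combination (y 0 * aeval y Q₁ * aeval y (pderiv 0 Q₁)
    + y 2 * aeval y Q₀ * aeval y (pderiv 0 Q₀)) * h2

lemma aeval_pderiv_discriminant₁ [CharP K 2] (y : Fin 3 → K) :
    aeval y (pderiv 1 (discriminant Q₀ Q₁ R)) =
      aeval y Q₀ * aeval y Q₁ + y 1 ^ 2 * aeval y (pderiv 1 R) +
        y 1 * (aeval y (pderiv 1 Q₀) * aeval y Q₁ + aeval y Q₀ * aeval y (pderiv 1 Q₁)) := by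
  have h2 : (2 : K) = 0 := by exact_mod_cast CharP.cast_eq_zero K 2
  simp only [discriminant, map_add, map_mul, map_pow, pderiv_mul, pderiv_pow, pderiv_X,
    Pi.single_apply, Fin.reduceEq, reduceIte, map_natCast, map_zero, map_one,
    zero_mul, mul_zero, add_zero, zero_add, mul_one, one_mul, aeval_X]
  linear_combination (y 0 * aeval y Q₁ * aeval y (pderiv 1 Q₁)
    + y 2 * aeval y Q₀ * aeval y (pderiv 1 Q₀) + y 1 * aeval y R) * h2

lemma aeval_pderiv_discriminant₂ [CharP K 2] (y : Fin 3 → K) :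
    aeval y (pderiv 2 (discriminant Q₀ Q₁ R)) =
      aeval y Q₀ ^ 2 + y 1 ^ 2 * aeval y (pderiv 2 R) +
        y 1 * (aeval y (pderiv 2 Q₀) * aeval y Q₁ + aeval y Q₀ * aeval y (pderiv 2 Q₁)) := by
  have h2 : (2 : K) = 0 := by exact_mod_cast CharP.cast_eq_zero K 2
  simp only [discriminant, map_add, map_mul, map_pow, pderiv_mul, pderiv_pow, pderiv_X,
    Pi.single_apply, Fin.reduceEq, reduceIte, map_natCast, map_zero, map_one,
    zero_mul, mul_zero, add_zero, zero_add, mul_one, one_mul, aeval_X]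
  linear_combination (y 0 * aeval y Q₁ * aeval y (pderiv 2 Q₁)
    + y 2 * aeval y Q₀ * aeval y (pderiv 2 Q₀)) * h2

lemma aeval_cubicForm (a : Fin 5 → K) :
    aeval a (cubicForm Q₀ Q₁ R) =
      a 3 ^ 2 * a 0 + a 3 * a 4 * a 1 + a 4 ^ 2 * a 2 +
        a 3 * aeval (a ∘ incl) Q₀ + a 4 * aeval (a ∘ incl) Q₁ + aeval (a ∘ incl) R := by
  simp only [cubicForm, map_add, map_mul, map_pow, aeval_X, aeval_rename]

lemma aeval_pderiv_cubicForm₃ [CharP K 2] (a : Fin 5 → K) :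
    aeval a (pderiv 3 (cubicForm Q₀ Q₁ R)) = a 4 * a 1 + aeval (a ∘ incl) Q₀ := by
  have h2 : (2 : K) = 0 := by exact_mod_cast CharP.cast_eq_zero K 2
  have e0 : pderiv (3 : Fin 5) (rename incl Q₀) = 0 := pderiv_rename_out _ _ (by decide)
  have e1 : pderiv (3 : Fin 5) (rename incl Q₁) = 0 := pderiv_rename_out _ _ (by decide)
  have e2 : pderiv (3 : Fin 5) (rename incl R) = 0 := pderiv_rename_out _ _ (by decide)
  simp only [cubicForm, map_add, map_mul, map_pow, pderiv_mul, pderiv_pow, pderiv_X, e0, e1, e2,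
    Pi.single_apply, Fin.reduceEq, reduceIte, map_natCast, map_zero, map_one,
    zero_mul, mul_zero, add_zero, zero_add, mul_one, one_mul, aeval_X, aeval_rename]
  linear_combination (a 3 * a 0) * h2

lemma aeval_pderiv_cubicForm₄ [CharP K 2] (a : Fin 5 → K) :
    aeval a (pderiv 4 (cubicForm Q₀ Q₁ R)) = a 3 * a 1 + aeval (a ∘ incl) Q₁ := by
  have h2 : (2 : K) = 0 := by exact_mod_cast CharP.cast_eq_zero K 2
  have e0 : pderiv (4 : Fin 5) (rename incl Q₀) = 0 := pderiv_rename_out _ _ (by decide)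
  have e1 : pderiv (4 : Fin 5) (rename incl Q₁) = 0 := pderiv_rename_out _ _ (by decide)
  have e2 : pderiv (4 : Fin 5) (rename incl R) = 0 := pderiv_rename_out _ _ (by decide)
  simp only [cubicForm, map_add, map_mul, map_pow, pderiv_mul, pderiv_pow, pderiv_X, e0, e1, e2,
    Pi.single_apply, Fin.reduceEq, reduceIte, map_natCast, map_zero, map_one,
    zero_mul, mul_zero, add_zero, zero_add, mul_one, one_mul, aeval_X, aeval_rename]
  linear_combination (a 4 * a 2) * h2

lemma aeval_pderiv_cubicForm₀ (a : Fin 5 → K) :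
    aeval a (pderiv 0 (cubicForm Q₀ Q₁ R)) =
      a 3 ^ 2 + a 3 * aeval (a ∘ incl) (pderiv 0 Q₀) + a 4 * aeval (a ∘ incl) (pderiv 0 Q₁) +
        aeval (a ∘ incl) (pderiv 0 R) := by
  have e0 : pderiv (0 : Fin 5) (rename incl Q₀) = rename incl (pderiv 0 Q₀) :=
    pderiv_rename incl_injective 0 Q₀
  have e1 : pderiv (0 : Fin 5) (rename incl Q₁) = rename incl (pderiv 0 Q₁) :=
    pderiv_rename incl_injective 0 Q₁
  have e2 : pderiv (0 : Fin 5) (rename incl R) = rename incl (pderiv 0 R) :=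
    pderiv_rename incl_injective 0 R
  simp only [cubicForm, map_add, map_mul, map_pow, pderiv_mul, pderiv_pow, pderiv_X, e0, e1, e2,
    Pi.single_apply, Fin.reduceEq, reduceIte, map_natCast, map_zero, map_one,
    zero_mul, mul_zero, add_zero, zero_add, mul_one, one_mul, aeval_X, aeval_rename]

lemma aeval_pderiv_cubicForm₁ (a : Fin 5 → K) :
    aeval a (pderiv 1 (cubicForm Q₀ Q₁ R)) =
      a 3 * a 4 + a 3 * aeval (a ∘ incl) (pderiv 1 Q₀) + a 4 * aeval (a ∘ incl) (pderiv 1 Q₁) +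
        aeval (a ∘ incl) (pderiv 1 R) := by
  have e0 : pderiv (1 : Fin 5) (rename incl Q₀) = rename incl (pderiv 1 Q₀) :=
    pderiv_rename incl_injective 1 Q₀
  have e1 : pderiv (1 : Fin 5) (rename incl Q₁) = rename incl (pderiv 1 Q₁) :=
    pderiv_rename incl_injective 1 Q₁
  have e2 : pderiv (1 : Fin 5) (rename incl R) = rename incl (pderiv 1 R) :=
    pderiv_rename incl_injective 1 R
  simp only [cubicForm, map_add, map_mul, map_pow, pderiv_mul, pderiv_pow, pderiv_X, e0, e1, e2,
    Pi.single_apply, Fin.reduceEq, reduceIte, map_natCast, map_zero, map_one,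
    zero_mul, mul_zero, add_zero, zero_add, mul_one, one_mul, aeval_X, aeval_rename]

lemma aeval_pderiv_cubicForm₂ (a : Fin 5 → K) :
    aeval a (pderiv 2 (cubicForm Q₀ Q₁ R)) =
      a 4 ^ 2 + a 3 * aeval (a ∘ incl) (pderiv 2 Q₀) + a 4 * aeval (a ∘ incl) (pderiv 2 Q₁) +
        aeval (a ∘ incl) (pderiv 2 R) := by
  have e0 : pderiv (2 : Fin 5) (rename incl Q₀) = rename incl (pderiv 2 Q₀) :=
    pderiv_rename incl_injective 2 Q₀
  have e1 : pderiv (2 : Fin 5) (rename incl Q₁) = rename incl (pderiv 2 Q₁) :=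
    pderiv_rename incl_injective 2 Q₁
  have e2 : pderiv (2 : Fin 5) (rename incl R) = rename incl (pderiv 2 R) :=
    pderiv_rename incl_injective 2 R
  simp only [cubicForm, map_add, map_mul, map_pow, pderiv_mul, pderiv_pow, pderiv_X, e0, e1, e2,
    Pi.single_apply, Fin.reduceEq, reduceIte, map_natCast, map_zero, map_one,
    zero_mul, mul_zero, add_zero, zero_add, mul_one, one_mul, aeval_X, aeval_rename]


lemma exists_square [IsAlgClosed K] [CharP K 2] (y : Fin 3 → K)
    (hb : y 1 = 0) (hD : aeval y Q₀ = 0) (hE : aeval y Q₁ = 0) :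
    ∃ l : Fin 3 → K, fiberConic Q₀ Q₁ R y = (∑ i : Fin 3, C (l i) * X i) ^ 2 := by
  obtain ⟨α, hα⟩ := IsAlgClosed.exists_pow_nat_eq (y 0) (n := 2) (by norm_num)
  obtain ⟨β, hβ⟩ := IsAlgClosed.exists_pow_nat_eq (y 2) (n := 2) (by norm_num)
  obtain ⟨γ, hγ⟩ := IsAlgClosed.exists_pow_nat_eq (aeval y R) (n := 2) (by norm_num)
  refine ⟨![α, β, γ], ?_⟩
  rw [Fin.sum_univ_three]
  show C (y 0) * X 0 ^ 2 + C (y 1) * X 0 * X 1 + C (y 2) * X 1 ^ 2 +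
      C (aeval y Q₀) * X 0 * X 2 + C (aeval y Q₁) * X 1 * X 2 + C (aeval y R) * X 2 ^ 2
    = (C α * X 0 + C β * X 1 + C γ * X 2) ^ 2
  rw [hb, hD, hE, map_zero]
  have hA : (C (y 0) : MvPolynomial (Fin 3) K) = C α ^ 2 := by rw [← hα, map_pow]
  have hB : (C (y 2) : MvPolynomial (Fin 3) K) = C β ^ 2 := by rw [← hβ, map_pow]
  have hC : (C (aeval y R) : MvPolynomial (Fin 3) K) = C γ ^ 2 := by rw [← hγ, map_pow]
  have h2p : (2 : MvPolynomial (Fin 3) K) = 0 := by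
    exact_mod_cast CharP.cast_eq_zero (MvPolynomial (Fin 3) K) 2
  linear_combination (X 0 ^ 2 : MvPolynomial (Fin 3) K) * hA + (X 1 ^ 2) * hB + (X 2 ^ 2) * hC
    - (C α * C β * X 0 * X 1 + C α * C γ * X 0 * X 2 + C β * C γ * X 1 * X 2) * h2p


/-- Let `char k = 2` and let `X = V₊(f) ⊂ ℙ⁴` be a smooth cubic
threefold containing the line `l = V₊(x₀,x₁,x₂)`, with
`f = u²x₀ + uvx₁ + v²x₂ + uQ₀ + vQ₁ + R` (`Q₀, Q₁` quadratic, `R` cubic in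
`x₀,x₁,x₂`).  Then the discriminant curve of the conic bundle obtained by projecting
away from `l` is the plane quintic `C = V₊(H)` with
`H = y₀Q₁² + y₁²R + y₁Q₀Q₁ + y₂Q₀²` — i.e. `H` vanishes at a point `y ≠ 0` over the
algebraic closure exactly when the fiber conic `K_y` is singular — and if `l` is a
good line (no fiber conic is a double line, i.e. `l ∉ F₁(X)`; `l ∉ F₀(X)` holds by the
normal form), then `C` is smooth. -/
theorem discriminant_eq_and_smooth [CharP k 2]
    (Q₀ Q₁ R : MvPolynomial (Fin 3) k)
    (hQ₀ : Q₀.IsHomogeneous 2) (hQ₁ : Q₁.IsHomogeneous 2) (hR : R.IsHomogeneous 3)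
    -- `X` is smooth (Jacobian criterion over the algebraic closure):
    (hXsmooth : ∀ a : Fin 5 → AlgebraicClosure k, a ≠ 0 →
      ¬ (aeval a (cubicForm Q₀ Q₁ R) = 0 ∧
          ∀ i : Fin 5, aeval a (pderiv i (cubicForm Q₀ Q₁ R)) = 0))
    -- `l` is a good line: no fiber conic is a double line:
    (hgood : ∀ y : Fin 3 → AlgebraicClosure k, y ≠ 0 →
      ¬ ∃ l : Fin 3 → AlgebraicClosure k,
          fiberConic Q₀ Q₁ R y = (∑ i : Fin 3, C (l i) * X i) ^ 2) :
    -- (1) `V₊(H)` is the discriminant locus of the conic bundle: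
    (∀ y : Fin 3 → AlgebraicClosure k, y ≠ 0 →
      (aeval y (discriminant Q₀ Q₁ R) = 0 ↔
        ∃ p : Fin 3 → AlgebraicClosure k, p ≠ 0 ∧
          aeval p (fiberConic Q₀ Q₁ R y) = 0 ∧
          ∀ i : Fin 3, aeval p (pderiv i (fiberConic Q₀ Q₁ R y)) = 0)) ∧
    -- (2) the discriminant curve `C = V₊(H)` is a smooth plane quintic:
    (discriminant Q₀ Q₁ R).IsHomogeneous 5 ∧
    (∀ y : Fin 3 → AlgebraicClosure k, y ≠ 0 →
      ¬ (aeval y (discriminant Q₀ Q₁ R) = 0 ∧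
          ∀ i : Fin 3, aeval y (pderiv i (discriminant Q₀ Q₁ R)) = 0)) := by
  classical
  haveI : CharP (AlgebraicClosure k) 2 :=
    charP_of_injective_algebraMap (algebraMap k (AlgebraicClosure k)).injective 2
  have h2 : (2 : AlgebraicClosure k) = 0 := by
    exact_mod_cast CharP.cast_eq_zero (AlgebraicClosure k) 2
  refine ⟨?_, ?_, ?_⟩
  · -- part (1)
    intro y hy
    constructor
    · intro hH
      rw [aeval_discriminant] at hH
      by_cases hb : y 1 = 0
      · by_cases hDE : aeval y Q₀ = 0 ∧ aeval y Q₁ = 0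
        · exact absurd (exists_square Q₀ Q₁ R y hb hDE.1 hDE.2) (hgood y hy)
        · refine ⟨![aeval y Q₁, aeval y Q₀, 0], ?_, ?_, ?_⟩
          · intro h0
            exact hDE ⟨congrFun h0 1, congrFun h0 0⟩
          · rw [aeval_fiberConic]
            show y 0 * aeval y Q₁ ^ 2 + y 1 * (aeval y Q₁ * aeval y Q₀) +
              y 2 * aeval y Q₀ ^ 2 + aeval y Q₀ * (aeval y Q₁ * 0) +
              aeval y Q₁ * (aeval y Q₀ * 0) + aeval y R * 0 ^ 2 = 0
            linear_combination hH + (- y 1 * aeval y R) * hb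
          · intro i
            fin_cases i
            · exact (aeval_pderiv_fiberConic₀ Q₀ Q₁ R y ![aeval y Q₁, aeval y Q₀, 0]).trans (by
                show y 1 * aeval y Q₀ + aeval y Q₀ * 0 = 0
                linear_combination (aeval y Q₀) * hb)
            · exact (aeval_pderiv_fiberConic₁ Q₀ Q₁ R y ![aeval y Q₁, aeval y Q₀, 0]).trans (by
                show y 1 * aeval y Q₁ + aeval y Q₁ * 0 = 0
                linear_combination (aeval y Q₁) * hb)
            · exact (aeval_pderiv_fiberConic₂ Q₀ Q₁ R y ![aeval y Q₁, aeval y Q₀, 0]).trans (by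
                show aeval y Q₀ * aeval y Q₁ + aeval y Q₁ * aeval y Q₀ = 0
                linear_combination (aeval y Q₀ * aeval y Q₁) * h2)
      · refine ⟨![aeval y Q₁, aeval y Q₀, y 1], fun h0 => hb (congrFun h0 2), ?_, ?_⟩
        · rw [aeval_fiberConic]
          show y 0 * aeval y Q₁ ^ 2 + y 1 * (aeval y Q₁ * aeval y Q₀) +
            y 2 * aeval y Q₀ ^ 2 + aeval y Q₀ * (aeval y Q₁ * y 1) +
            aeval y Q₁ * (aeval y Q₀ * y 1) + aeval y R * y 1 ^ 2 = 0
          linear_combination hH + (aeval y Q₀ * aeval y Q₁ * y 1) * h2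
        · intro i
          fin_cases i
          · exact (aeval_pderiv_fiberConic₀ Q₀ Q₁ R y ![aeval y Q₁, aeval y Q₀, y 1]).trans (by
              show y 1 * aeval y Q₀ + aeval y Q₀ * y 1 = 0
              linear_combination (y 1 * aeval y Q₀) * h2)
          · exact (aeval_pderiv_fiberConic₁ Q₀ Q₁ R y ![aeval y Q₁, aeval y Q₀, y 1]).trans (by
              show y 1 * aeval y Q₁ + aeval y Q₁ * y 1 = 0
              linear_combination (y 1 * aeval y Q₁) * h2)
          · exact (aeval_pderiv_fiberConic₂ Q₀ Q₁ R y ![aeval y Q₁, aeval y Q₀, y 1]).trans (by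
              show aeval y Q₀ * aeval y Q₁ + aeval y Q₁ * aeval y Q₀ = 0
              linear_combination (aeval y Q₀ * aeval y Q₁) * h2)
    · rintro ⟨p, hp, hG, hPD⟩
      have h0 := hPD 0; rw [aeval_pderiv_fiberConic₀] at h0
      have h1 := hPD 1; rw [aeval_pderiv_fiberConic₁] at h1
      have h2' := hPD 2; rw [aeval_pderiv_fiberConic₂] at h2'
      rw [aeval_fiberConic] at hG
      rw [aeval_discriminant]
      by_cases ht : p 2 = 0
      · by_cases hb : y 1 = 0
        · by_cases hp1 : p 1 = 0
          · have hp0 : p 0 ≠ 0 := by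
              intro hp0
              exact hp (funext fun i => by fin_cases i <;> assumption)
            have hD0 : aeval y Q₀ = 0 := by
              have hDp : aeval y Q₀ * p 0 = 0 := by
                linear_combination h2' - (aeval y Q₁) * hp1
              exact (mul_eq_zero.mp hDp).resolve_right hp0
            have hy0 : y 0 = 0 := by
              have : y 0 * p 0 ^ 2 = 0 := by
                linear_combination hG - (p 0 * p 1) * hb
                  - (y 2 * p 1 + aeval y Q₁ * p 2) * hp1
                  - (aeval y Q₀ * p 0 + aeval y R * p 2) * ht
              rcases mul_eq_zero.mp this with h | h
              · exact h
              · exact absurd (pow_eq_zero_iff (by norm_num) |>.mp h) hp0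
            linear_combination (aeval y Q₁ ^ 2) * hy0
              + (y 1 * aeval y R + aeval y Q₀ * aeval y Q₁) * hb
              + (y 2 * aeval y Q₀) * hD0
          · have key : (y 0 * aeval y Q₁ ^ 2 + y 1 ^ 2 * aeval y R +
                y 1 * (aeval y Q₀ * aeval y Q₁) + y 2 * aeval y Q₀ ^ 2) * p 1 ^ 2 = 0 := by
              linear_combination (aeval y Q₀ ^ 2) * hG
                + (y 0 * (aeval y Q₁ * p 1 - aeval y Q₀ * p 0)) * h2'
                + (y 1 * aeval y R * p 1 ^ 2 + aeval y Q₀ * aeval y Q₁ * p 1 ^ 2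
                    - aeval y Q₀ ^ 2 * p 0 * p 1) * hb
                - (aeval y Q₀ ^ 3 * p 0 + aeval y Q₀ ^ 2 * aeval y Q₁ * p 1
                    + aeval y Q₀ ^ 2 * aeval y R * p 2) * ht
            rcases mul_eq_zero.mp key with h | h
            · exact h
            · exact absurd (pow_eq_zero_iff (by norm_num) |>.mp h) hp1
        · exfalso
          apply hp
          have hp1 : p 1 = 0 := by
            have : y 1 * p 1 = 0 := by linear_combination h0 - (aeval y Q₀) * ht
            exact (mul_eq_zero.mp this).resolve_left hb
          have hp0 : p 0 = 0 := by
            have : y 1 * p 0 = 0 := by linear_combination h1 - (aeval y Q₁) * ht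
            exact (mul_eq_zero.mp this).resolve_left hb
          exact funext fun i => by fin_cases i <;> assumption
      · have key : (y 0 * aeval y Q₁ ^ 2 + y 1 ^ 2 * aeval y R +
            y 1 * (aeval y Q₀ * aeval y Q₁) + y 2 * aeval y Q₀ ^ 2) * p 2 ^ 2 = 0 := by
          linear_combination (y 1 ^ 2) * hG
            + (y 2 * (aeval y Q₀ * p 2 - y 1 * p 1) + y 1 * aeval y Q₁ * p 2) * h0
            + (y 0 * (aeval y Q₁ * p 2 - y 1 * p 0) - y 1 ^ 2 * p 1) * h1
            + (- y 1 ^ 2 * p 2) * h2'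
        rcases mul_eq_zero.mp key with h | h
        · exact h
        · exact absurd (pow_eq_zero_iff (by norm_num) |>.mp h) ht
  · -- part (2)
    have e1 : ((X 0 : MvPolynomial (Fin 3) k) * Q₁ ^ 2).IsHomogeneous (1 + 2 * 2) :=
      (isHomogeneous_X _ _).mul (hQ₁.pow 2)
    have e2 : ((X 1 : MvPolynomial (Fin 3) k) ^ 2 * R).IsHomogeneous (1 * 2 + 3) :=
      ((isHomogeneous_X _ _).pow 2).mul hR
    have e3 : ((X 1 : MvPolynomial (Fin 3) k) * Q₀ * Q₁).IsHomogeneous (1 + 2 + 2) :=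
      ((isHomogeneous_X _ _).mul hQ₀).mul hQ₁
    have e4 : ((X 2 : MvPolynomial (Fin 3) k) * Q₀ ^ 2).IsHomogeneous (1 + 2 * 2) :=
      (isHomogeneous_X _ _).mul (hQ₀.pow 2)
    norm_num at e1 e2 e3 e4
    exact ((e1.add e2).add e3).add e4
  · -- part (3)
    intro y hy hcontra
    obtain ⟨hH, hPD⟩ := hcontra
    rw [aeval_discriminant] at hH
    have hd0 := hPD 0; rw [aeval_pderiv_discriminant₀] at hd0
    have hd1 := hPD 1; rw [aeval_pderiv_discriminant₁] at hd1
    have hd2 := hPD 2; rw [aeval_pderiv_discriminant₂] at hd2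
    by_cases hb : y 1 = 0
    · have hE : aeval y Q₁ = 0 := by
        have : aeval y Q₁ ^ 2 = 0 := by
          linear_combination hd0 - (y 1 * aeval y (pderiv 0 R)
            + (aeval y (pderiv 0 Q₀) * aeval y Q₁ + aeval y Q₀ * aeval y (pderiv 0 Q₁))) * hb
        exact pow_eq_zero_iff (by norm_num) |>.mp this
      have hD : aeval y Q₀ = 0 := by
        have : aeval y Q₀ ^ 2 = 0 := by
          linear_combination hd2 - (y 1 * aeval y (pderiv 2 R)
            + (aeval y (pderiv 2 Q₀) * aeval y Q₁ + aeval y Q₀ * aeval y (pderiv 2 Q₁))) * hb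
        exact pow_eq_zero_iff (by norm_num) |>.mp this
      exact hgood y hy (exists_square Q₀ Q₁ R y hb hD hE)
    · set u := aeval y Q₁ / y 1 with hu
      set v := aeval y Q₀ / y 1 with hv
      set a : Fin 5 → AlgebraicClosure k := ![y 0, y 1, y 2, u, v] with hadef
      have hane : a ≠ 0 := fun h => hb (congrFun h 1)
      have hcomp : (a ∘ incl) = y := by funext j; fin_cases j <;> rfl
      apply hXsmooth a hane
      constructor
      · rw [aeval_cubicForm, hcomp]
        show u ^ 2 * y 0 + u * v * y 1 + v ^ 2 * y 2 + u * aeval y Q₀ + v * aeval y Q₁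
          + aeval y R = 0
        rw [hu, hv]
        have hinv : y 1 * (y 1)⁻¹ = 1 := mul_inv_cancel₀ hb
        linear_combination ((y 1)⁻¹ ^ 2) * hH + (aeval y Q₀ * aeval y Q₁ * (y 1)⁻¹) * h2
          - (aeval y R * (y 1 * (y 1)⁻¹ + 1)) * hinv
      · intro i
        fin_cases i
        · exact (aeval_pderiv_cubicForm₀ Q₀ Q₁ R a).trans (by
            rw [hcomp]
            show u ^ 2 + u * aeval y (pderiv 0 Q₀) + v * aeval y (pderiv 0 Q₁)
              + aeval y (pderiv 0 R) = 0
            rw [hu, hv]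
            field_simp [hb]
            linear_combination hd0)
        · exact (aeval_pderiv_cubicForm₁ Q₀ Q₁ R a).trans (by
            rw [hcomp]
            show u * v + u * aeval y (pderiv 1 Q₀) + v * aeval y (pderiv 1 Q₁)
              + aeval y (pderiv 1 R) = 0
            rw [hu, hv]
            field_simp [hb]
            linear_combination hd1)
        · exact (aeval_pderiv_cubicForm₂ Q₀ Q₁ R a).trans (by
            rw [hcomp]
            show v ^ 2 + u * aeval y (pderiv 2 Q₀) + v * aeval y (pderiv 2 Q₁)
              + aeval y (pderiv 2 R) = 0
            rw [hu, hv]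
            field_simp [hb]
            linear_combination hd2)
        · exact (aeval_pderiv_cubicForm₃ Q₀ Q₁ R a).trans (by
            rw [hcomp]
            show v * y 1 + aeval y Q₀ = 0
            rw [hv, div_mul_cancel₀ _ hb]
            linear_combination (aeval y Q₀) * h2)
        · exact (aeval_pderiv_cubicForm₄ Q₀ Q₁ R a).trans (by
            rw [hcomp]
            show u * y 1 + aeval y Q₁ = 0
            rw [hu, div_mul_cancel₀ _ hb]
            linear_combination (aeval y Q₁) * h2)


end Stmt17
end
end
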